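/- Under Mallows' model with a single sample (n=1), for any number of alternatives m, any dispersion 0<φ<1, any ranking W ∈ ℒ(𝒜), any alternatives b,c ∈ 𝒜 with b ≻_W c, and any integer K, we have π_W({V ∈ ℒ(𝒜) : Borda_b(V) ≥ K}) ≥ π_W({V ∈ ℒ(𝒜) : Borda_c(V) ≥ K}). -/

import Mathlib

namespace Voting

open Finset

/-- A ranking over `m` alternatives: `V a` is the position of alternative `a`
(smaller position = more preferred), i.e. `a ≻_V b ↔ V a < V b`. -/
abbrev Ranking (m : ℕ) := Equiv.Perm (Fin m)

/-- Kendall-tau distance: the number of (unordered) pairs on which `V` and `W` disagree. -/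
def KT {m : ℕ} (V W : Ranking m) : ℕ :=
  (Finset.univ.filter (fun p : Fin m × Fin m => V p.1 < V p.2 ∧ W p.2 < W p.1)).card

/-- Mallows' single-sample probability of `V` given ground truth `W` and dispersion `φ`. -/
noncomputable def mallows1 {m : ℕ} (φ : ℝ) (W V : Ranking m) : ℝ :=
  φ ^ KT V W / ∑ U : Ranking m, φ ^ KT U W

/-- Mallows' model with `n` i.i.d. samples. -/
noncomputable def mallows {m : ℕ} (φ : ℝ) (n : ℕ) :
    Ranking m → (Fin n → Ranking m) → ℝ :=
  fun W P => ∏ i, mallows1 φ W (P i)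

/-- `L_{a≻others}` : rankings in which `a` is ranked at the top. -/
def Ltop {m : ℕ} (a : Fin m) : Set (Ranking m) := {V | ∀ b, b ≠ a → V a < V b}

/-- `L_{others≻a}` : rankings in which `a` is ranked at the bottom. -/
def Lbot {m : ℕ} (a : Fin m) : Set (Ranking m) := {V | ∀ b, b ≠ a → V b < V a}

/-- `w_P(b≻a)` : the weighted-majority-graph weight on the edge `b → a` of profile `P`. -/
def wpair {m n : ℕ} (P : Fin n → Ranking m) (b a : Fin m) : ℤ :=
  ((Finset.univ.filter (fun i => P i b < P i a)).card : ℤ) -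
    ((Finset.univ.filter (fun i => P i a < P i b)).card : ℤ)

/-- `w_P(B≻a) = Σ_{b∈B} w_P(b≻a)`. -/
def wset {m n : ℕ} (P : Fin n → Ranking m) (B : Finset (Fin m)) (a : Fin m) : ℤ :=
  ∑ b ∈ B, wpair P b a

/-- The threshold test on the statistic `w_P(B≻a)` with threshold `K`/randomization `Γ`. -/
noncomputable def wTest {m : ℕ} (n : ℕ) (B : Finset (Fin m)) (a : Fin m) (K Γ : ℝ) :
    (Fin n → Ranking m) → ℝ :=
  fun P =>
    if K < ((wset P B a : ℤ) : ℝ) then 1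
    else if ((wset P B a : ℤ) : ℝ) < K then 0
    else Γ

/-- The Borda score of `a` in `V`: the number of alternatives ranked below `a`. -/
def Borda {m : ℕ} (a : Fin m) (V : Ranking m) : ℕ :=
  (Finset.univ.filter (fun b => V a < V b)).card


/-- **Borda dominance lemma.** Under Mallows' model with a single sample,
if `b ≻_W c` then `π_W({V : Borda_b(V) ≥ K}) ≥ π_W({V : Borda_c(V) ≥ K})`. -/
lemma card_filter_perm {m : ℕ} (σ : Equiv.Perm (Fin m)) (p : Fin m → Prop) [DecidablePred p] :
    (univ.filter (fun x => p (σ x))).card = (univ.filter p).card :=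
  Finset.card_equiv σ (by simp)

lemma borda_mul_swap {m : ℕ} (b c a : Fin m) (V : Ranking m) :
    Borda a (V * Equiv.swap b c) = Borda (Equiv.swap b c a) V := by
  unfold Borda
  simp only [Equiv.Perm.mul_apply]
  convert card_filter_perm (Equiv.swap b c) (fun x => V ((Equiv.swap b c) a) < V x)
  ext x
  exact ⟨fun h => Finset.mem_filter.mpr ⟨mem_univ _, (Finset.mem_filter.mp h).2⟩,
    fun h => Finset.mem_filter.mpr ⟨mem_univ _, (Finset.mem_filter.mp h).2⟩⟩

lemma KT_swap_le {m : ℕ} (U W : Ranking m) (b c : Fin m)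
    (hU : U b < U c) (hW : W b < W c) :
    KT U W ≤ KT (U * Equiv.swap b c) W := by
  classical
  set σ := Equiv.swap b c with hσ
  unfold KT
  apply Finset.card_le_card_of_injOn
    (fun p : Fin m × Fin m => if U (σ p.1) < U (σ p.2) then p else (σ p.1, σ p.2))
  · rintro ⟨p, q⟩ hpq
    simp only [mem_coe, mem_filter, mem_univ, true_and] at hpq ⊢
    obtain ⟨h1, h2⟩ := hpq
    by_cases h : U (σ p) < U (σ q)
    · simpa [h, Equiv.Perm.mul_apply] using h2
    · simp only [h, if_false, Equiv.Perm.mul_apply]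
      refine ⟨by simp only [hσ, Equiv.swap_apply_self]; exact h1, ?_⟩
      -- show W (σ q) < W (σ p)
      by_cases hpb : p = b
      · by_cases hqc : q = c
        · exact absurd (hpb ▸ hqc ▸ h2) (not_lt.2 hW.le)
        · by_cases hqb : q = b
          · exact absurd (hpb ▸ hqb ▸ h1) (lt_irrefl _)
          · rw [hσ] at *
            rw [hpb, Equiv.swap_apply_left, Equiv.swap_apply_of_ne_of_ne hqb hqc]
            calc W q < W b := hpb ▸ h2
              _ < W c := hW
      · by_cases hpc : p = c
        · by_cases hqb : q = b
          · exact absurd (hpc ▸ hqb ▸ h1) (not_lt.2 hU.le)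
          · by_cases hqc : q = c
            · exact absurd (hpc ▸ hqc ▸ h1) (lt_irrefl _)
            · exfalso; apply h
              rw [hσ, hpc, Equiv.swap_apply_right, Equiv.swap_apply_of_ne_of_ne hqb hqc]
              exact hU.trans (hpc ▸ h1)
        · by_cases hqb : q = b
          · exfalso; apply h
            rw [hσ, hqb, Equiv.swap_apply_left, Equiv.swap_apply_of_ne_of_ne hpb hpc]
            exact (hqb ▸ h1).trans hU
          · by_cases hqc : q = c
            · rw [hσ] at *
              rw [hqc, Equiv.swap_apply_right, Equiv.swap_apply_of_ne_of_ne hpb hpc]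
              calc W b < W c := hW
                _ < W p := hqc ▸ h2
            · exfalso; apply h
              rw [hσ, Equiv.swap_apply_of_ne_of_ne hpb hpc,
                Equiv.swap_apply_of_ne_of_ne hqb hqc]
              exact h1
  · rintro ⟨p1, q1⟩ h1 ⟨p2, q2⟩ h2 heq
    simp only [mem_coe, mem_filter, mem_univ, true_and] at h1 h2
    by_cases c1 : U (σ p1) < U (σ q1) <;> by_cases c2 : U (σ p2) < U (σ q2) <;>
      simp only [c1, c2, if_true, if_false, Prod.mk.injEq] at heq
    · exact Prod.ext heq.1 heq.2
    · exact absurd (by rw [← heq.1, ← heq.2]; exact h1.1) c2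
    · exact absurd (by rw [heq.1, heq.2]; exact h2.1) c1
    · refine Prod.ext ?_ ?_
      · exact σ.injective heq.1
      · exact σ.injective heq.2

theorem stmt16 (m : ℕ) (φ : ℝ) (hφ0 : 0 < φ) (hφ1 : φ < 1)
    (W : Ranking m) (b c : Fin m) (hbc : W b < W c) (K : ℤ) :
    ∑ V ∈ Finset.univ.filter (fun V : Ranking m => K ≤ (Borda c V : ℤ)),
        mallows1 φ W V ≤
      ∑ V ∈ Finset.univ.filter (fun V : Ranking m => K ≤ (Borda b V : ℤ)),
        mallows1 φ W V := by
  classical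
  have hbne : b ≠ c := by rintro rfl; exact lt_irrefl _ hbc
  set σ := Equiv.swap b c with hσ
  have hσσ : ∀ V : Ranking m, V * σ * σ = V := by
    intro V; rw [mul_assoc, hσ, Equiv.swap_mul_self, mul_one]
  have hZ : 0 < ∑ U : Ranking m, φ ^ KT U W :=
    Finset.sum_pos (fun U _ => pow_pos hφ0 _) Finset.univ_nonempty
  have hpos : ∀ V : Ranking m, 0 ≤ mallows1 φ W V := fun V =>
    div_nonneg (pow_nonneg hφ0.le _) hZ.le
  have hmono : ∀ V : Ranking m, V b < V c → mallows1 φ W (V * σ) ≤ mallows1 φ W V := by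
    intro V hV
    unfold mallows1
    have := pow_le_pow_of_le_one hφ0.le hφ1.le (KT_swap_le V W b c hV hbc)
    exact div_le_div_of_nonneg_right this hZ.le
  have key : ∀ a : Fin m,
      ∑ V ∈ Finset.univ.filter (fun V : Ranking m => K ≤ (Borda a V : ℤ)),
        mallows1 φ W V
      = ∑ V ∈ Finset.univ.filter (fun V : Ranking m => V b < V c),
          ((if K ≤ (Borda a V : ℤ) then mallows1 φ W V else 0)
            + (if K ≤ (Borda a (V * σ) : ℤ) then mallows1 φ W (V * σ) else 0)) := by
    intro a
    rw [Finset.sum_filter,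
      ← Finset.sum_filter_add_sum_filter_not Finset.univ (fun V : Ranking m => V b < V c)
        (fun V => if K ≤ (Borda a V : ℤ) then mallows1 φ W V else 0),
      Finset.sum_add_distrib]
    congr 1
    refine Finset.sum_nbij' (i := fun V => V * σ) (j := fun V => V * σ) ?_ ?_ ?_ ?_ ?_
    · intro V hV
      simp only [mem_filter, mem_univ, true_and, not_lt] at hV ⊢
      have hne : V c ≠ V b := fun h => hbne (V.injective h).symm
      have : V c < V b := lt_of_le_of_ne hV hne
      simpa [hσ, Equiv.Perm.mul_apply] using this
    · intro V hV
      simp only [mem_filter, mem_univ, true_and, not_lt] at hV ⊢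
      have : (V * σ) c < (V * σ) b := by
        simpa [hσ, Equiv.Perm.mul_apply] using hV
      exact this.le
    · intro V _; exact hσσ V
    · intro V _; exact hσσ V
    · intro V _
      rw [hσσ V]
  rw [key b, key c]
  apply Finset.sum_le_sum
  intro V hV
  simp only [mem_filter, mem_univ, true_and] at hV
  have h1 : Borda c (V * σ) = Borda b V := by
    rw [hσ, borda_mul_swap, Equiv.swap_apply_right]
  have h2 : Borda b (V * σ) = Borda c V := by
    rw [hσ, borda_mul_swap, Equiv.swap_apply_left]
  rw [h1, h2]
  have hxy : Borda c V ≤ Borda b V := by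
    apply Finset.card_le_card
    intro x hx
    simp only [mem_filter, mem_univ, true_and] at hx ⊢
    exact hV.trans hx
  have hxy' : (Borda c V : ℤ) ≤ (Borda b V : ℤ) := Int.ofNat_le.mpr hxy
  have hm := hmono V hV
  have hp := hpos (V * σ)
  split_ifs with h3 h4 h4 <;> linarith
end Voting
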